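/- Let A be a real matrix and let L = λ_max(AᵀA), μ = λ_min(AᵀA). Suppose R : ℝ^n → ℝ^n is differentiable and the map u ↦ R(u) - u is ε₁-Lipschitz. Define f(u) = u - η(Aᵀ(Au - b) + R(u)) for a step size η with 0 < η < 1/(L+1). Then f is γ-Lipschitz with γ = 1 - η(1+μ) + ηε₁; in particular, if ε₁ < 1 + μ, then f is a contraction. -/

import Mathlib

open Matrix

/-- Matrix–vector multiplication viewed as a map between Euclidean spaces. -/
noncomputable def mvE {m n : ℕ} (A : Matrix (Fin m) (Fin n) ℝ)
    (u : EuclideanSpace ℝ (Fin n)) : EuclideanSpace ℝ (Fin m) :=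
  (WithLp.equiv 2 (Fin m → ℝ)).symm (A.mulVec (WithLp.equiv 2 (Fin n → ℝ) u))

lemma mvE_sub {m n : ℕ} (A : Matrix (Fin m) (Fin n) ℝ) (x y : EuclideanSpace ℝ (Fin n)) :
    mvE A (x - y) = mvE A x - mvE A y := by
  apply (WithLp.equiv 2 (Fin m → ℝ)).injective
  simp [mvE, Matrix.mulVec_sub]

lemma mvE_mvE {m n : ℕ} (A : Matrix (Fin m) (Fin n) ℝ) (B : Matrix (Fin n) (Fin m) ℝ)
    (x : EuclideanSpace ℝ (Fin m)) : mvE A (mvE B x) = mvE (A * B) x := by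
  apply (WithLp.equiv 2 (Fin m → ℝ)).injective
  simp [mvE, Matrix.mulVec_mulVec]

lemma inner_mvE {n : ℕ} (M : Matrix (Fin n) (Fin n) ℝ) (hM : M.IsHermitian)
    (x w : EuclideanSpace ℝ (Fin n)) :
    (inner ℝ x (mvE M w) : ℝ) = inner ℝ (mvE M x) w := by
  have hMT : Mᵀ = M := by
    have := hM.eq
    simpa [conjTranspose_eq_transpose_of_trivial] using this
  simp only [mvE, PiLp.inner_apply, RCLike.inner_apply, starRingEnd_apply, star_trivial,
    WithLp.equiv, Equiv.refl_apply, Equiv.refl_symm]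
  calc _ = x ⬝ᵥ M *ᵥ w := Finset.sum_congr rfl fun i _ => mul_comm _ _
    _ = (M *ᵥ x) ⬝ᵥ w := by
        rw [Matrix.dotProduct_mulVec, ← Matrix.mulVec_transpose, hMT]
    _ = _ := Finset.sum_congr rfl fun i _ => mul_comm _ _

lemma key_contraction {n : ℕ} (M : Matrix (Fin n) (Fin n) ℝ) (hM : M.IsHermitian) (c η : ℝ)
    (hc : 0 ≤ c) (hbound : ∀ i, |1 - η - η * hM.eigenvalues i| ≤ c)
    (w : EuclideanSpace ℝ (Fin n)) : ‖w - η • (w + mvE M w)‖ ≤ c * ‖w‖ := by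
  set B := hM.eigenvectorBasis
  set y := w - η • (w + mvE M w) with hy
  have hrepr : ∀ i, B.repr y i = (1 - η - η * hM.eigenvalues i) * B.repr w i := by
    intro i
    have hMB : (inner ℝ (B i) (mvE M w) : ℝ) = hM.eigenvalues i * inner ℝ (B i) w := by
      rw [inner_mvE M hM]
      have h1 : mvE M (B i) = hM.eigenvalues i • B i := by
        apply (WithLp.equiv 2 (Fin n → ℝ)).injective
        simpa [mvE] using hM.mulVec_eigenvectorBasis i
      rw [h1, real_inner_smul_left]
    simp only [B.repr_apply_apply, hy, inner_sub_right, inner_add_right,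
      real_inner_smul_right, hMB]
    ring
  have h2 : ‖y‖ ^ 2 ≤ (c * ‖w‖) ^ 2 := by
    rw [← B.repr.norm_map y, ← B.repr.norm_map w]
    rw [EuclideanSpace.norm_eq, EuclideanSpace.norm_eq]
    rw [Real.sq_sqrt (by positivity), mul_pow, Real.sq_sqrt (by positivity),
      Finset.mul_sum]
    apply Finset.sum_le_sum
    intro i _
    rw [hrepr i, Real.norm_eq_abs, Real.norm_eq_abs, abs_mul, mul_pow]
    apply mul_le_mul_of_nonneg_right _ (by positivity)
    exact pow_le_pow_left₀ (abs_nonneg _) (hbound i) 2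
  exact (pow_le_pow_iff_left₀ (norm_nonneg y) (by positivity) two_ne_zero).mp h2

/-- Theorem 1 (convergence of LRPE with empirical data fidelity):
with `f(u) = u - η(Aᵀ(Au - b) + R(u))`, `f` is `γ`-Lipschitz with
`γ = 1 - η(1+μ) + ηε₁`, and is a contraction when `ε₁ < 1 + μ`. -/
theorem lrpe_empirical_fidelity_contraction {m n : ℕ}
    (A : Matrix (Fin m) (Fin n) ℝ) (b : EuclideanSpace ℝ (Fin m))
    (hH : (Aᵀ * A).IsHermitian) (L μ ε₁ η : ℝ)
    (hL : L = ⨆ i, hH.eigenvalues i) (hμ : μ = ⨅ i, hH.eigenvalues i)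
    (R : EuclideanSpace ℝ (Fin n) → EuclideanSpace ℝ (Fin n))
    (hR : Differentiable ℝ R)
    (hLip : ∀ u u' : EuclideanSpace ℝ (Fin n),
      ‖(R u - u) - (R u' - u')‖ ≤ ε₁ * ‖u - u'‖)
    (hη0 : 0 < η) (hη1 : η < 1 / (L + 1))
    (f : EuclideanSpace ℝ (Fin n) → EuclideanSpace ℝ (Fin n))
    (hf : ∀ u, f u = u - η • (mvE Aᵀ (mvE A u - b) + R u)) :
    (∀ u u', ‖f u - f u'‖ ≤ (1 - η * (1 + μ) + η * ε₁) * ‖u - u'‖) ∧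
      (ε₁ < 1 + μ → 1 - η * (1 + μ) + η * ε₁ < 1) := by
  -- basic facts about η, L, μ
  have hL1 : 0 < L + 1 := by
    by_contra h
    push_neg at h
    have : 1 / (L + 1) ≤ 0 := div_nonpos_of_nonneg_of_nonpos zero_le_one h
    linarith
  have hηL : η * (L + 1) < 1 := (lt_div_iff₀ hL1).mp hη1
  have hlamle : ∀ i, hH.eigenvalues i ≤ L := fun i => by
    rw [hL]; exact le_ciSup (Set.Finite.bddAbove (Set.finite_range _)) i
  have hlamge : ∀ i, μ ≤ hH.eigenvalues i := fun i => by
    rw [hμ]; exact ciInf_le (Set.Finite.bddBelow (Set.finite_range _)) i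
  have hμL : μ ≤ L := by
    rcases isEmpty_or_nonempty (Fin n) with hE | hNE
    · rw [hL, hμ, Real.iSup_of_isEmpty, Real.iInf_of_isEmpty]
    · exact le_trans (hlamge (Classical.arbitrary _)) (hlamle (Classical.arbitrary _))
  have hc : 0 ≤ 1 - η * (1 + μ) := by nlinarith
  have hbound : ∀ i, |1 - η - η * hH.eigenvalues i| ≤ 1 - η * (1 + μ) := by
    intro i
    have h1 := hlamle i
    have h2 := hlamge i
    rw [abs_le]
    constructor <;> nlinarith
  constructor
  · intro u u'
    set w := u - u' with hw
    set d := (R u - u) - (R u' - u') with hd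
    have hdiff : f u - f u' = (w - η • (w + mvE (Aᵀ * A) w)) - η • d := by
      rw [hf u, hf u']
      rw [hw, hd, mvE_sub (Aᵀ * A) u u', mvE_sub Aᵀ (mvE A u) b,
        mvE_sub Aᵀ (mvE A u') b, mvE_mvE, mvE_mvE]
      module
    have h1 : ‖f u - f u'‖ ≤ ‖w - η • (w + mvE (Aᵀ * A) w)‖ + ‖η • d‖ := by
      rw [hdiff]; exact norm_sub_le _ _
    have h2 : ‖w - η • (w + mvE (Aᵀ * A) w)‖ ≤ (1 - η * (1 + μ)) * ‖w‖ :=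
      key_contraction _ hH _ _ hc hbound w
    have h3 : ‖η • d‖ ≤ η * (ε₁ * ‖w‖) := by
      rw [norm_smul, Real.norm_eq_abs, abs_of_pos hη0]
      exact mul_le_mul_of_nonneg_left (hLip u u') hη0.le
    calc ‖f u - f u'‖ ≤ (1 - η * (1 + μ)) * ‖w‖ + η * (ε₁ * ‖w‖) := by linarith
      _ = (1 - η * (1 + μ) + η * ε₁) * ‖w‖ := by ring
  · intro h
    nlinarith [mul_pos hη0 (sub_pos.mpr h)]
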